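/- Any n-letter jamming strategy satisfying the average cost constraint n·P_J achieves average per-letter distortion at most D(P_J). That is, if the jammer's (possibly correlated, possibly randomized) conditional distribution p_{J^n|X^n} satisfies Σ_{i=1}^n E[ρ(J_i|X_i)] ≤ n·P_J, then (1/n)Σ_{i=1}^n E[d(S_i,Ŝ_i)] ≤ D(P_J). -/

import Mathlib

open Finset

/-- A (row-stochastic) probability kernel from `A` to `B`. -/
def IsKernel {A B : Type*} [Fintype B] (q : A → B → ℝ) : Prop :=
  (∀ a b, 0 ≤ q a b) ∧ ∀ a, ∑ b, q a b = 1

/-- A probability mass function on `A`. -/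
def IsPMF {A : Type*} [Fintype A] (p : A → ℝ) : Prop :=
  (∀ a, 0 ≤ p a) ∧ ∑ a, p a = 1

section Defs

variable {S X J Y Sh : Type*} [Fintype S] [Fintype X] [Fintype J] [Fintype Y] [Fintype Sh]

/-- Expected distortion of a single-letter jamming kernel `q` under the joint law
`p_S p_{X|S} q p_{Y|X,J} p_{Ŝ|Y}`. -/
def Edist (pS : S → ℝ) (pXS : S → X → ℝ) (ch : X → J → Y → ℝ) (dec : Y → Sh → ℝ)
    (d : S → Sh → ℝ) (q : X → J → ℝ) : ℝ :=
  ∑ s, ∑ x, ∑ j, ∑ y, ∑ sh,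
    pS s * pXS s x * q x j * ch x j y * dec y sh * d s sh

/-- Expected jammer cost of a single-letter jamming kernel `q`. -/
def Ecost (pS : S → ℝ) (pXS : S → X → ℝ) (ρ : J → X → ℝ) (q : X → J → ℝ) : ℝ :=
  ∑ s, ∑ x, ∑ j, pS s * pXS s x * q x j * ρ j x

/-- The jammer's distortion cost function `D(P_J)`: the supremum of expected distortions
over all single-letter jamming kernels of expected cost at most `P`. -/
noncomputable def Dfun (pS : S → ℝ) (pXS : S → X → ℝ) (ch : X → J → Y → ℝ)
    (dec : Y → Sh → ℝ) (d : S → Sh → ℝ) (ρ : J → X → ℝ) (P : ℝ) : ℝ :=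
  sSup {D | ∃ q : X → J → ℝ, IsKernel q ∧ Ecost pS pXS ρ q ≤ P ∧
    Edist pS pXS ch dec d q = D}

end Defs

section Multiletter

variable {S X J Y Sh : Type*} [Fintype S] [Fintype X] [Fintype J] [Fintype Y] [Fintype Sh]

/-- Joint probability of the `n`-letter tuple `(s^n, x^n, j^n, y^n, ŝ^n)` when the source
is i.i.d. `p_S`, the user applies the single-letter strategy `(p_{X|S}, p_{Ŝ|Y})`
memorylessly, the channel is memoryless, and the jammer uses an arbitrary (possibly
correlated, possibly randomized) strategy `Pn : X^n → dist(J^n)`. -/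
def jointProb (pS : S → ℝ) (pXS : S → X → ℝ) (ch : X → J → Y → ℝ) (dec : Y → Sh → ℝ)
    {n : ℕ} (Pn : (Fin n → X) → (Fin n → J) → ℝ)
    (sv : Fin n → S) (xv : Fin n → X) (jv : Fin n → J) (yv : Fin n → Y)
    (shv : Fin n → Sh) : ℝ :=
  (∏ i, pS (sv i) * pXS (sv i) (xv i)) * Pn xv jv *
    ∏ i, ch (xv i) (jv i) (yv i) * dec (yv i) (shv i)

/-- The expected distortion `E[d(S_i, Ŝ_i)]` at position `i`. -/
def EdistI (pS : S → ℝ) (pXS : S → X → ℝ) (ch : X → J → Y → ℝ) (dec : Y → Sh → ℝ)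
    (d : S → Sh → ℝ) {n : ℕ} (Pn : (Fin n → X) → (Fin n → J) → ℝ) (i : Fin n) : ℝ :=
  ∑ sv : Fin n → S, ∑ xv : Fin n → X, ∑ jv : Fin n → J, ∑ yv : Fin n → Y,
    ∑ shv : Fin n → Sh,
      jointProb pS pXS ch dec Pn sv xv jv yv shv * d (sv i) (shv i)

/-- The expected jammer cost `E[ρ(J_i|X_i)]` at position `i`. -/
def EcostI (pS : S → ℝ) (pXS : S → X → ℝ) (ρ : J → X → ℝ)
    {n : ℕ} (Pn : (Fin n → X) → (Fin n → J) → ℝ) (i : Fin n) : ℝ :=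
  ∑ sv : Fin n → S, ∑ xv : Fin n → X, ∑ jv : Fin n → J,
    (∏ k, pS (sv k) * pXS (sv k) (xv k)) * Pn xv jv * ρ (jv i) (xv i)

end Multiletter

lemma sum_prod_pi {ι : Type*} [Fintype ι] [DecidableEq ι] {X : Type*} [Fintype X]
    (f : ι → X → ℝ) :
    ∑ xv : ι → X, ∏ k, f k (xv k) = ∏ k, ∑ x, f k x := by
  rw [Finset.prod_univ_sum, Fintype.piFinset_univ]

lemma sum_prod_weight {ι : Type*} [Fintype ι] [DecidableEq ι] {X : Type*} [Fintype X]
    (f : ι → X → ℝ) (i : ι) (w : X → ℝ) :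
    ∑ xv : ι → X, (∏ k, f k (xv k)) * w (xv i)
      = (∑ x, f i x * w x) * ∏ k ∈ univ.erase i, ∑ x, f k x := by
  classical
  set u : ι → X → ℝ := fun k => if k = i then (fun x => f k x * w x) else f k with hu
  have h1 : ∀ xv : ι → X, ∏ k, u k (xv k) = (∏ k, f k (xv k)) * w (xv i) := by
    intro xv
    rw [← Finset.mul_prod_erase univ (fun k => u k (xv k)) (mem_univ i),
        ← Finset.mul_prod_erase univ (fun k => f k (xv k)) (mem_univ i)]
    rw [Finset.prod_congr rfl (show ∀ k ∈ univ.erase i,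
        u k (xv k) = f k (xv k) from fun k hk => by
          simp only [u, if_neg (Finset.mem_erase.mp hk).1])]
    simp only [u, if_pos rfl]; ring
  calc ∑ xv : ι → X, (∏ k, f k (xv k)) * w (xv i)
      = ∑ xv : ι → X, ∏ k, u k (xv k) :=
        Finset.sum_congr rfl fun xv _ => (h1 xv).symm
    _ = ∏ k, ∑ x, u k x := sum_prod_pi u
    _ = (∑ x, f i x * w x) * ∏ k ∈ univ.erase i, ∑ x, f k x := by
        rw [← Finset.mul_prod_erase univ (fun k => ∑ x, u k x) (mem_univ i)]
        congr 1
        · simp only [u, if_pos rfl]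
        · exact Finset.prod_congr rfl fun k hk => by
            simp only [u, if_neg (Finset.mem_erase.mp hk).1]


/- ====== helper constructions ====== -/

section Helper

variable {S X J Y Sh : Type*} [Fintype S] [Fintype X] [Fintype J] [Fintype Y] [Fintype Sh]

/-- marginal of `X` -/
def pXm (pS : S → ℝ) (pXS : S → X → ℝ) : X → ℝ := fun x => ∑ s, pS s * pXS s x

/-- single-letter distortion given `(s,x,j)` -/
def gfun (ch : X → J → Y → ℝ) (dec : Y → Sh → ℝ) (d : S → Sh → ℝ) : S → X → J → ℝ :=
  fun s x j => ∑ y, ∑ sh, ch x j y * dec y sh * d s sh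

/-- distortion weight of `(x,j)` -/
def Gfun (pS : S → ℝ) (pXS : S → X → ℝ) (ch : X → J → Y → ℝ) (dec : Y → Sh → ℝ)
    (d : S → Sh → ℝ) : X → J → ℝ :=
  fun x j => ∑ s, pS s * pXS s x * gfun ch dec d s x j

/-- the induced single-letter jamming kernel at position `i` -/
def qI [DecidableEq X] [DecidableEq J] (pS : S → ℝ) (pXS : S → X → ℝ) {n : ℕ}
    (Pn : (Fin n → X) → (Fin n → J) → ℝ) (i : Fin n) : X → J → ℝ :=
  fun x j => ∑ xv : Fin n → X, ∑ jv : Fin n → J,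
    (if xv i = x then (1:ℝ) else 0) * (if jv i = j then (1:ℝ) else 0) *
      ((∏ k ∈ univ.erase i, pXm pS pXS (xv k)) * Pn xv jv)

variable (pS : S → ℝ) (pXS : S → X → ℝ) (ch : X → J → Y → ℝ) (dec : Y → Sh → ℝ)
  (d : S → Sh → ℝ) (ρ : J → X → ℝ)

lemma pXm_nonneg (hpS : IsPMF pS) (hpXS : IsKernel pXS) (x : X) : 0 ≤ pXm pS pXS x :=
  Finset.sum_nonneg fun s _ => mul_nonneg (hpS.1 s) (hpXS.1 s x)

lemma pXm_sum (hpS : IsPMF pS) (hpXS : IsKernel pXS) : ∑ x, pXm pS pXS x = 1 := by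
  unfold pXm
  rw [Finset.sum_comm]
  simp only [← Finset.mul_sum, hpXS.2, mul_one, hpS.2]

end Helper

section Helper2

lemma sum_delta {X : Type*} [Fintype X] [DecidableEq X] (a : X) (h : X → ℝ) :
    ∑ x, (if a = x then (1:ℝ) else 0) * h x = h a := by
  simp [ite_mul, Finset.sum_ite_eq]

lemma sum_swap4 {A B C D : Type*} [Fintype A] [Fintype B] [Fintype C] [Fintype D]
    (f : A → B → C → D → ℝ) :
    ∑ a : A, ∑ b : B, ∑ c : C, ∑ e : D, f a b c e
      = ∑ c : C, ∑ e : D, ∑ a : A, ∑ b : B, f a b c e := by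
  have h1 : ∀ a, ∑ b : B, ∑ c : C, ∑ e : D, f a b c e
      = ∑ c : C, ∑ e : D, ∑ b : B, f a b c e := by
    intro a
    rw [Finset.sum_comm]
    exact Finset.sum_congr rfl fun c _ => Finset.sum_comm
  simp only [h1]
  rw [Finset.sum_comm]
  exact Finset.sum_congr rfl fun c _ => Finset.sum_comm

lemma sum_swap3 {A B C : Type*} [Fintype A] [Fintype B] [Fintype C]
    (f : A → B → C → ℝ) :
    ∑ a : A, ∑ b : B, ∑ c : C, f a b c = ∑ b : B, ∑ c : C, ∑ a : A, f a b c := by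
  rw [Finset.sum_comm]
  exact Finset.sum_congr rfl fun b _ => Finset.sum_comm

variable {S X J Y Sh : Type*} [Fintype S] [Fintype X] [Fintype J] [Fintype Y] [Fintype Sh]
variable (pS : S → ℝ) (pXS : S → X → ℝ) (ch : X → J → Y → ℝ) (dec : Y → Sh → ℝ)
  (d : S → Sh → ℝ) (ρ : J → X → ℝ)

/-- collapsing the induced kernel against a test function -/
lemma sum_qI_mul [DecidableEq X] [DecidableEq J] {n : ℕ}
    (Pn : (Fin n → X) → (Fin n → J) → ℝ) (i : Fin n) (F : X → J → ℝ) :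
    ∑ x, ∑ j, qI pS pXS Pn i x j * F x j
      = ∑ xv : Fin n → X, ∑ jv : Fin n → J,
          F (xv i) (jv i) * ((∏ k ∈ univ.erase i, pXm pS pXS (xv k)) * Pn xv jv) := by
  unfold qI
  simp only [Finset.sum_mul]
  rw [sum_swap4]
  refine Finset.sum_congr rfl fun xv _ => Finset.sum_congr rfl fun jv _ => ?_
  have h : ∀ x j, (if xv i = x then (1:ℝ) else 0) * (if jv i = j then (1:ℝ) else 0) *
        ((∏ k ∈ univ.erase i, pXm pS pXS (xv k)) * Pn xv jv) * F x j
      = (if xv i = x then (1:ℝ) else 0) * ((if jv i = j then (1:ℝ) else 0) *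
          (((∏ k ∈ univ.erase i, pXm pS pXS (xv k)) * Pn xv jv) * F x j)) :=
    fun x j => by ring
  simp only [h, ← Finset.mul_sum]
  simp only [sum_delta]
  ring

/-- the induced kernel is a kernel -/
lemma qI_kernel [DecidableEq X] [DecidableEq J] (hpS : IsPMF pS) (hpXS : IsKernel pXS)
    {n : ℕ} (Pn : (Fin n → X) → (Fin n → J) → ℝ) (hPn : IsKernel Pn) (i : Fin n) :
    IsKernel (qI pS pXS Pn i) := by
  constructor
  · intro x j
    refine Finset.sum_nonneg fun xv _ => Finset.sum_nonneg fun jv _ => ?_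
    refine mul_nonneg (mul_nonneg ?_ ?_)
      (mul_nonneg (Finset.prod_nonneg fun k _ => pXm_nonneg pS pXS hpS hpXS _) (hPn.1 _ _))
    · split <;> norm_num
    · split <;> norm_num
  · intro x
    have key : ∑ j, qI pS pXS Pn i x j
        = ∑ xv : Fin n → X,
            (∏ k, (fun k' => if k' = i then (fun _ : X => (1:ℝ)) else pXm pS pXS) k (xv k)) *
              (fun x' => if x' = x then (1:ℝ) else 0) (xv i) := by
      unfold qI
      rw [sum_swap3]
      refine Finset.sum_congr rfl fun xv _ => ?_
      have h : ∀ (jv : Fin n → J) (j : J),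
          (if xv i = x then (1:ℝ) else 0) * (if jv i = j then (1:ℝ) else 0) *
            ((∏ k ∈ univ.erase i, pXm pS pXS (xv k)) * Pn xv jv)
          = (if jv i = j then (1:ℝ) else 0) *
              ((if xv i = x then (1:ℝ) else 0) *
                ((∏ k ∈ univ.erase i, pXm pS pXS (xv k)) * Pn xv jv)) :=
        fun jv j => by ring
      calc ∑ jv : Fin n → J, ∑ j : J,
            (if xv i = x then (1:ℝ) else 0) * (if jv i = j then (1:ℝ) else 0) *
              ((∏ k ∈ univ.erase i, pXm pS pXS (xv k)) * Pn xv jv)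
          = ∑ jv : Fin n → J,
              (if xv i = x then (1:ℝ) else 0) *
                ((∏ k ∈ univ.erase i, pXm pS pXS (xv k)) * Pn xv jv) := by
            refine Finset.sum_congr rfl fun jv _ => ?_
            simp only [h, sum_delta]
        _ = (if xv i = x then (1:ℝ) else 0) * (∏ k ∈ univ.erase i, pXm pS pXS (xv k)) := by
            simp only [← mul_assoc, ← Finset.mul_sum, hPn.2, mul_one]
        _ = (∏ k, (fun k' => if k' = i then (fun _ : X => (1:ℝ)) else pXm pS pXS) k (xv k)) *
              (fun x' => if x' = x then (1:ℝ) else 0) (xv i) := by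
            rw [← Finset.mul_prod_erase univ
              (fun k => (fun k' => if k' = i then (fun _ : X => (1:ℝ)) else pXm pS pXS) k (xv k))
              (mem_univ i)]
            simp only [if_pos rfl, one_mul]
            rw [Finset.prod_congr rfl (fun k hk => by
              simp only [if_neg (Finset.mem_erase.mp hk).1] :
              ∀ k ∈ univ.erase i,
                (fun k' => if k' = i then (fun _ : X => (1:ℝ)) else pXm pS pXS) k (xv k)
                  = pXm pS pXS (xv k))]
            simp
    rw [key, sum_prod_weight (fun k' => if k' = i then (fun _ : X => (1:ℝ)) else pXm pS pXS)
      i (fun x' => if x' = x then (1:ℝ) else 0)]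
    rw [Finset.prod_congr rfl (fun k hk => by
      simp only [if_neg (Finset.mem_erase.mp hk).1] :
      ∀ k ∈ univ.erase i, (∑ x', (fun k' => if k' = i then (fun _ : X => (1:ℝ))
        else pXm pS pXS) k x') = ∑ x', pXm pS pXS x')]
    rw [Finset.prod_const, pXm_sum pS pXS hpS hpXS, one_pow, mul_one]
    simp

end Helper2

section Helper3

variable {S X J Y Sh : Type*} [Fintype S] [Fintype X] [Fintype J] [Fintype Y] [Fintype Sh]
variable (pS : S → ℝ) (pXS : S → X → ℝ) (ch : X → J → Y → ℝ) (dec : Y → Sh → ℝ)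
  (d : S → Sh → ℝ) (ρ : J → X → ℝ)

lemma sum_sv {n : ℕ} (xv : Fin n → X) (w : S → ℝ) (i : Fin n) :
    ∑ sv : Fin n → S, (∏ k, pS (sv k) * pXS (sv k) (xv k)) * w (sv i)
      = (∑ s, pS s * pXS s (xv i) * w s) * ∏ k ∈ univ.erase i, pXm pS pXS (xv k) :=
  sum_prod_weight (fun k (s : S) => pS s * pXS s (xv k)) i w

lemma sum_yvshv (hch : ∀ x, IsKernel (ch x)) (hdec : IsKernel dec)
    {n : ℕ} (s0 : S) (xv : Fin n → X) (jv : Fin n → J) (i : Fin n) :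
    ∑ yv : Fin n → Y, ∑ shv : Fin n → Sh,
        (∏ k, ch (xv k) (jv k) (yv k) * dec (yv k) (shv k)) * d s0 (shv i)
      = gfun ch dec d s0 (xv i) (jv i) := by
  classical
  set e := Equiv.arrowProdEquivProdArrow (Fin n) (fun _ => Y) (fun _ => Sh) with he
  set F : (Fin n → Y) × (Fin n → Sh) → ℝ := fun p =>
    (∏ k, ch (xv k) (jv k) (p.1 k) * dec (p.1 k) (p.2 k)) * d s0 (p.2 i) with hF
  have h0 : ∑ yv : Fin n → Y, ∑ shv : Fin n → Sh,
      (∏ k, ch (xv k) (jv k) (yv k) * dec (yv k) (shv k)) * d s0 (shv i)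
      = ∑ zv : Fin n → Y × Sh,
          (∏ k, (fun k' (p : Y × Sh) => ch (xv k') (jv k') p.1 * dec p.1 p.2) k (zv k)) *
            (fun p : Y × Sh => d s0 p.2) (zv i) :=
    ((Equiv.sum_comp e F).trans (Fintype.sum_prod_type F)).symm
  rw [h0, sum_prod_weight (fun k' (p : Y × Sh) => ch (xv k') (jv k') p.1 * dec p.1 p.2) i
    (fun p : Y × Sh => d s0 p.2)]
  have h1 : (∑ p : Y × Sh, ch (xv i) (jv i) p.1 * dec p.1 p.2 * d s0 p.2)
      = gfun ch dec d s0 (xv i) (jv i) := by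
    rw [Fintype.sum_prod_type]; rfl
  have h2 : ∀ k ∈ univ.erase i,
      (∑ p : Y × Sh, ch (xv k) (jv k) p.1 * dec p.1 p.2) = 1 := by
    intro k _
    rw [Fintype.sum_prod_type]
    simp only [← Finset.mul_sum, hdec.2, mul_one, (hch (xv k)).2]
  rw [Finset.prod_congr rfl h2, Finset.prod_const_one, mul_one]
  exact h1

lemma Ecost_eq (q : X → J → ℝ) :
    Ecost pS pXS ρ q = ∑ x, ∑ j, q x j * (pXm pS pXS x * ρ j x) := by
  unfold Ecost
  rw [sum_swap3]
  refine Finset.sum_congr rfl fun x _ => Finset.sum_congr rfl fun j _ => ?_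
  have h : ∀ s, pS s * pXS s x * q x j * ρ j x = (pS s * pXS s x) * (q x j * ρ j x) :=
    fun s => by ring
  simp only [h, ← Finset.sum_mul]
  unfold pXm; ring

lemma Edist_eq (q : X → J → ℝ) :
    Edist pS pXS ch dec d q = ∑ x, ∑ j, q x j * Gfun pS pXS ch dec d x j := by
  unfold Edist
  have h1 : ∀ s x j, ∑ y, ∑ sh, pS s * pXS s x * q x j * ch x j y * dec y sh * d s sh
      = pS s * pXS s x * q x j * gfun ch dec d s x j := by
    intro s x j
    unfold gfun
    have h : ∀ (y : Y) (sh : Sh), pS s * pXS s x * q x j * ch x j y * dec y sh * d s sh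
        = (pS s * pXS s x * q x j) * (ch x j y * dec y sh * d s sh) := fun y sh => by ring
    simp only [h, ← Finset.mul_sum]
  simp only [h1]
  rw [sum_swap3]
  refine Finset.sum_congr rfl fun x _ => Finset.sum_congr rfl fun j _ => ?_
  have h : ∀ s, pS s * pXS s x * q x j * gfun ch dec d s x j
      = (pS s * pXS s x * gfun ch dec d s x j) * q x j := fun s => by ring
  simp only [h, ← Finset.sum_mul]
  unfold Gfun; ring

lemma Ecost_qI [DecidableEq X] [DecidableEq J] {n : ℕ}
    (Pn : (Fin n → X) → (Fin n → J) → ℝ) (i : Fin n) :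
    Ecost pS pXS ρ (qI pS pXS Pn i) = EcostI pS pXS ρ Pn i := by
  rw [Ecost_eq, sum_qI_mul]
  unfold EcostI
  symm
  rw [sum_swap3]
  refine Finset.sum_congr rfl fun xv _ => Finset.sum_congr rfl fun jv _ => ?_
  have hsv : ∑ sv : Fin n → S, ∏ k, pS (sv k) * pXS (sv k) (xv k)
      = ∏ k, pXm pS pXS (xv k) :=
    sum_prod_pi (fun k (s : S) => pS s * pXS s (xv k))
  calc ∑ sv : Fin n → S,
        (∏ k, pS (sv k) * pXS (sv k) (xv k)) * Pn xv jv * ρ (jv i) (xv i)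
      = (∑ sv : Fin n → S, ∏ k, pS (sv k) * pXS (sv k) (xv k)) *
          (Pn xv jv * ρ (jv i) (xv i)) := by
        rw [Finset.sum_mul]
        exact Finset.sum_congr rfl fun sv _ => by ring
    _ = (∏ k, pXm pS pXS (xv k)) * (Pn xv jv * ρ (jv i) (xv i)) := by rw [hsv]
    _ = (pXm pS pXS (xv i) * ρ (jv i) (xv i)) *
          ((∏ k ∈ univ.erase i, pXm pS pXS (xv k)) * Pn xv jv) := by
        rw [← Finset.mul_prod_erase univ (fun k => pXm pS pXS (xv k)) (mem_univ i)]
        ring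

lemma Edist_qI [DecidableEq X] [DecidableEq J] (hch : ∀ x, IsKernel (ch x))
    (hdec : IsKernel dec) {n : ℕ}
    (Pn : (Fin n → X) → (Fin n → J) → ℝ) (i : Fin n) :
    Edist pS pXS ch dec d (qI pS pXS Pn i) = EdistI pS pXS ch dec d Pn i := by
  rw [Edist_eq, sum_qI_mul]
  unfold EdistI jointProb
  symm
  have h1 : ∀ (sv : Fin n → S) (xv : Fin n → X) (jv : Fin n → J),
      ∑ yv : Fin n → Y, ∑ shv : Fin n → Sh,
        ((∏ k, pS (sv k) * pXS (sv k) (xv k)) * Pn xv jv *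
          ∏ k, ch (xv k) (jv k) (yv k) * dec (yv k) (shv k)) * d (sv i) (shv i)
      = (∏ k, pS (sv k) * pXS (sv k) (xv k)) * Pn xv jv *
          gfun ch dec d (sv i) (xv i) (jv i) := by
    intro sv xv jv
    have h : ∀ (yv : Fin n → Y) (shv : Fin n → Sh),
        ((∏ k, pS (sv k) * pXS (sv k) (xv k)) * Pn xv jv *
          ∏ k, ch (xv k) (jv k) (yv k) * dec (yv k) (shv k)) * d (sv i) (shv i)
        = ((∏ k, pS (sv k) * pXS (sv k) (xv k)) * Pn xv jv) *
            ((∏ k, ch (xv k) (jv k) (yv k) * dec (yv k) (shv k)) * d (sv i) (shv i)) :=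
      fun yv shv => by ring
    simp only [h, ← Finset.mul_sum]
    rw [sum_yvshv ch dec d hch hdec (sv i) xv jv i]
  simp only [h1]
  rw [sum_swap3]
  refine Finset.sum_congr rfl fun xv _ => Finset.sum_congr rfl fun jv _ => ?_
  calc ∑ sv : Fin n → S, (∏ k, pS (sv k) * pXS (sv k) (xv k)) * Pn xv jv *
        gfun ch dec d (sv i) (xv i) (jv i)
      = (∑ sv : Fin n → S, (∏ k, pS (sv k) * pXS (sv k) (xv k)) *
          gfun ch dec d (sv i) (xv i) (jv i)) * Pn xv jv := by
        rw [Finset.sum_mul]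
        exact Finset.sum_congr rfl fun sv _ => by ring
    _ = ((∑ s, pS s * pXS s (xv i) * gfun ch dec d s (xv i) (jv i)) *
          ∏ k ∈ univ.erase i, pXm pS pXS (xv k)) * Pn xv jv :=
        congrArg (fun z => z * Pn xv jv)
          (sum_sv pS pXS xv (fun s => gfun ch dec d s (xv i) (jv i)) i)
    _ = Gfun pS pXS ch dec d (xv i) (jv i) *
          ((∏ k ∈ univ.erase i, pXm pS pXS (xv k)) * Pn xv jv) := by
        unfold Gfun; ring

end Helper3

/-- Theorem 2 of the paper: any `n`-letter jamming strategy satisfying the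
average cost constraint `n P_J` achieves average per-letter distortion at most `D(P_J)`. -/
theorem multiletter_jamming_le_Dfun {S X J Y Sh : Type*}
    [Fintype S] [Fintype X] [Fintype J] [Fintype Y] [Fintype Sh]
    (pS : S → ℝ) (pXS : S → X → ℝ) (ch : X → J → Y → ℝ) (dec : Y → Sh → ℝ)
    (d : S → Sh → ℝ) (ρ : J → X → ℝ)
    (hpS : IsPMF pS) (hpXS : IsKernel pXS) (hch : ∀ x, IsKernel (ch x))
    (hdec : IsKernel dec) (hd : ∀ s sh, 0 ≤ d s sh)
    (n : ℕ) (hn : 0 < n) (PJ : ℝ)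
    (Pn : (Fin n → X) → (Fin n → J) → ℝ) (hPn : IsKernel Pn)
    (hcost : ∑ i, EcostI pS pXS ρ Pn i ≤ n * PJ) :
    (1 / n) * ∑ i, EdistI pS pXS ch dec d Pn i ≤ Dfun pS pXS ch dec d ρ PJ := by
  classical
  have hn0 : (0:ℝ) < n := by exact_mod_cast hn
  set qbar : X → J → ℝ := fun x j => (∑ i, qI pS pXS Pn i x j) / n with hqbar
  have hkerbar : IsKernel qbar := by
    constructor
    · intro x j
      exact div_nonneg
        (Finset.sum_nonneg fun i _ => (qI_kernel pS pXS hpS hpXS Pn hPn i).1 x j)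
        (Nat.cast_nonneg n)
    · intro x
      simp only [hqbar]
      rw [← Finset.sum_div, Finset.sum_comm]
      rw [Finset.sum_congr rfl fun i _ => (qI_kernel pS pXS hpS hpXS Pn hPn i).2 x]
      rw [Finset.sum_const, Finset.card_univ, Fintype.card_fin, nsmul_eq_mul, mul_one]
      exact div_self hn0.ne'
  have hlin : ∀ (F : X → J → ℝ),
      ∑ x, ∑ j, qbar x j * F x j
        = (∑ i, ∑ x, ∑ j, qI pS pXS Pn i x j * F x j) / n := by
    intro F
    have h : ∀ x j, qbar x j * F x j
        = (∑ i, qI pS pXS Pn i x j * F x j) / n := by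
      intro x j
      simp only [hqbar]
      rw [div_mul_eq_mul_div, Finset.sum_mul]
    simp only [h, ← Finset.sum_div]
    congr 1
    rw [← sum_swap3]
  have hEc : Ecost pS pXS ρ qbar = (∑ i, EcostI pS pXS ρ Pn i) / n := by
    rw [Ecost_eq, hlin]
    congr 1
    exact Finset.sum_congr rfl fun i _ =>
      ((Ecost_eq pS pXS ρ (qI pS pXS Pn i)).symm.trans (Ecost_qI pS pXS ρ Pn i))
  have hEd : Edist pS pXS ch dec d qbar = (∑ i, EdistI pS pXS ch dec d Pn i) / n := by
    rw [Edist_eq, hlin]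
    congr 1
    exact Finset.sum_congr rfl fun i _ =>
      ((Edist_eq pS pXS ch dec d (qI pS pXS Pn i)).symm.trans
        (Edist_qI pS pXS ch dec d hch hdec Pn i))
  have hEc2 : Ecost pS pXS ρ qbar ≤ PJ := by
    rw [hEc, div_le_iff₀ hn0]
    linarith
  have hmem : (1 / n) * ∑ i, EdistI pS pXS ch dec d Pn i ∈
      {D | ∃ q : X → J → ℝ, IsKernel q ∧ Ecost pS pXS ρ q ≤ PJ ∧
        Edist pS pXS ch dec d q = D} :=
    ⟨qbar, hkerbar, hEc2, by rw [hEd]; ring⟩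
  have hbdd : BddAbove {D | ∃ q : X → J → ℝ, IsKernel q ∧ Ecost pS pXS ρ q ≤ PJ ∧
      Edist pS pXS ch dec d q = D} := by
    refine ⟨∑ s, ∑ _x : X, ∑ _j : J, ∑ _y : Y, ∑ sh, d s sh, ?_⟩
    rintro D ⟨q, hq, -, rfl⟩
    unfold Edist
    refine Finset.sum_le_sum fun s _ => Finset.sum_le_sum fun x _ =>
      Finset.sum_le_sum fun j _ => Finset.sum_le_sum fun y _ =>
      Finset.sum_le_sum fun sh _ => ?_
    have b1 : pS s ≤ 1 := by
      have := Finset.single_le_sum (f := pS) (fun a _ => hpS.1 a) (mem_univ s)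
      rwa [hpS.2] at this
    have b2 : pXS s x ≤ 1 := by
      have := Finset.single_le_sum (f := pXS s) (fun a _ => hpXS.1 s a) (mem_univ x)
      rwa [hpXS.2 s] at this
    have b3 : q x j ≤ 1 := by
      have := Finset.single_le_sum (f := q x) (fun a _ => hq.1 x a) (mem_univ j)
      rwa [hq.2 x] at this
    have b4 : ch x j y ≤ 1 := by
      have := Finset.single_le_sum (f := ch x j) (fun a _ => (hch x).1 j a) (mem_univ y)
      rwa [(hch x).2 j] at this
    have b5 : dec y sh ≤ 1 := by
      have := Finset.single_le_sum (f := dec y) (fun a _ => hdec.1 y a) (mem_univ sh)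
      rwa [hdec.2 y] at this
    have h1 : pS s * pXS s x * q x j * ch x j y * dec y sh ≤ 1 :=
      mul_le_one₀ (mul_le_one₀ (mul_le_one₀ (mul_le_one₀ b1 (hpXS.1 s x) b2)
        (hq.1 x j) b3) ((hch x).1 j y) b4) (hdec.1 y sh) b5
    calc pS s * pXS s x * q x j * ch x j y * dec y sh * d s sh
        ≤ 1 * d s sh := mul_le_mul_of_nonneg_right h1 (hd s sh)
      _ = d s sh := one_mul _
  exact le_csSup hbdd hmem
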